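/- Let q be an odd prime power and n an odd positive integer, let p be the characteristic of F_{q^n}, and let χ : F_{q^n} → ℂ be the canonical additive character χ(x) = ζ_p^{Tr_{F_{q^n}/F_p}(x)} where ζ_p is a primitive p-th root of unity in ℂ and Tr_{F_{q^n}/F_p} is the absolute trace. Let η be the quadratic character of F_{q^n} (η(x) = 1 if x is a nonzero square, η(x) = -1 if x is a nonsquare, η(0) = 0), let G = ∑_{x ∈ F_{q^n}} η(x)χ(x) be the quadratic Gauss sum, let λ(x) = ∑_{i=0}^{n-1} (-1)^{i+1} x^{q^{2i}}, let N(x) = ∏_{i=0}^{n-1} x^{q^i}, and let s = ∑_{i=1}^{(n-1)/2} q^{2i}. Then for all A, B ∈ F_{q^n} with A ≠ 0: ∑_{w ∈ F_{q^n}} χ(A·w^{q+1} + B·w) = η(A)·G·χ( -λ(A^s·B^q)^{q+1} / (4·N(A)) ). -/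

import Mathlib

open Finset

private lemma aux_even_odd_sum (f : ℕ → ℕ) (k : ℕ) :
    ∑ j ∈ Finset.range (2 * k), f j = ∑ i ∈ Finset.range k, (f (2 * i) + f (2 * i + 1)) := by
  induction k with
  | zero => simp
  | succ k ih =>
      have h2 : 2 * (k + 1) = (2 * k + 1) + 1 := by ring
      rw [Finset.sum_range_succ, ← ih, h2, Finset.sum_range_succ, Finset.sum_range_succ]
      ring

private lemma aux_exists_e (q n : ℕ) (hq3 : 3 ≤ q) (hqodd : Odd q) (hnodd : Odd n) :
    ∃ e : ℕ, 0 < e ∧ Nat.Coprime e (q ^ n - 1) ∧ (q + 1) ≡ 2 * e [MOD q ^ n - 1] := by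
  have hn1 : 0 < n := hnodd.pos
  have hqn : q ≤ q ^ n := Nat.le_self_pow (by omega) q
  have hqnodd : Odd (q ^ n) := hqodd.pow
  have hN2 : 2 ≤ q ^ n - 1 := by omega
  have hNeven : 2 ∣ q ^ n - 1 := by obtain ⟨t, ht⟩ := hqnodd; omega
  have hdvd : q + 1 ∣ q ^ n + 1 := by
    simpa using hnodd.nat_add_dvd_pow_add_pow q 1
  have hgcd : Nat.gcd (q + 1) (q ^ n - 1) = 2 := by
    have h2 : Nat.gcd (q + 1) (q ^ n - 1) ∣ q ^ n + 1 := (Nat.gcd_dvd_left _ _).trans hdvd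
    have h3 : Nat.gcd (q + 1) (q ^ n - 1) ∣ q ^ n - 1 := Nat.gcd_dvd_right _ _
    have h4 : q ^ n + 1 - (q ^ n - 1) = 2 := by omega
    have h1 : Nat.gcd (q + 1) (q ^ n - 1) ∣ 2 := h4 ▸ Nat.dvd_sub h2 h3
    have h5 : 2 ∣ Nat.gcd (q + 1) (q ^ n - 1) := by
      refine Nat.dvd_gcd ?_ hNeven
      obtain ⟨t, ht⟩ := hqodd; omega
    exact Nat.dvd_antisymm h1 h5
  obtain ⟨m', hm'⟩ : 2 ∣ q + 1 := by obtain ⟨t, ht⟩ := hqodd; omega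
  obtain ⟨M, hM⟩ := hNeven
  have hMpos : 0 < M := by omega
  have hcop : Nat.Coprime m' M := by
    have hd1 : 2 * Nat.gcd m' M ∣ q + 1 := by
      rw [hm']; exact Nat.mul_dvd_mul_left 2 (Nat.gcd_dvd_left _ _)
    have hd2 : 2 * Nat.gcd m' M ∣ q ^ n - 1 := by
      rw [hM]; exact Nat.mul_dvd_mul_left 2 (Nat.gcd_dvd_right _ _)
    have hd3 : 2 * Nat.gcd m' M ∣ 2 := by
      have := Nat.dvd_gcd hd1 hd2
      rwa [hgcd] at this
    have hle := Nat.le_of_dvd (by norm_num) hd3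
    have hgpos : 0 < Nat.gcd m' M := Nat.gcd_pos_of_pos_right _ hMpos
    unfold Nat.Coprime
    omega
  haveI : NeZero (q ^ n - 1) := ⟨by omega⟩
  have hMdvd : M ∣ q ^ n - 1 := ⟨2, by omega⟩
  obtain ⟨u, hu⟩ := ZMod.unitsMap_surjective hMdvd (ZMod.unitOfCoprime m' hcop)
  refine ⟨(u : ZMod (q ^ n - 1)).val, ?_, ZMod.val_coe_unit_coprime u, ?_⟩
  · rcases Nat.eq_zero_or_pos (u : ZMod (q ^ n - 1)).val with h0 | h
    · exfalso
      have hc := ZMod.val_coe_unit_coprime u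
      rw [h0] at hc
      have := Nat.coprime_zero_left _ |>.mp hc
      omega
    · exact h
  · have hcast : (((u : ZMod (q ^ n - 1)).val : ℕ) : ZMod M) = (m' : ZMod M) := by
      have h1 : ZMod.castHom hMdvd (ZMod M) (u : ZMod (q ^ n - 1)) = (m' : ZMod M) := by
        have h2 := congrArg (Units.val) hu
        simpa [ZMod.unitsMap, ZMod.coe_unitOfCoprime] using h2
      rw [← h1, ZMod.natCast_val, ZMod.castHom_apply]
    have hmod : (u : ZMod (q ^ n - 1)).val ≡ m' [MOD M] :=
      (ZMod.natCast_eq_natCast_iff _ _ _).mp hcast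
    have hfin := (hmod.mul_left' 2).symm
    rw [← hm', ← hM] at hfin
    exact hfin

/-- Evaluation of the Weil sum `∑_w χ(A·w^{q+1} + B·w)` over `F_{q^n}` for odd
`q` and odd `n`, where `χ` is the canonical additive character, `η` the quadratic character,
`G` the quadratic Gauss sum, `λ(x) = ∑ (-1)^{i+1} x^{q^{2i}}`, `N` the norm and
`s = ∑_{i=1}^{(n-1)/2} q^{2i}`. -/
theorem stmt_14 (q n p : ℕ) (hq : IsPrimePow q) (hqodd : Odd q) (hn : Odd n)
    (hp : p.Prime)
    (F : Type*) [Field F] [Fintype F] [CharP F p] [Algebra (ZMod p) F] (hF : Fintype.card F = q ^ n)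
    (ζ : ℂ) (hζ : IsPrimitiveRoot ζ p)
    (χ : F → ℂ) (hχ : ∀ x, χ x = ζ ^ (Algebra.trace (ZMod p) F x).val)
    (η : F → ℂ) (hη0 : η 0 = 0)
    (hη1 : ∀ x : F, x ≠ 0 → (∃ y, y ^ 2 = x) → η x = 1)
    (hη2 : ∀ x : F, x ≠ 0 → ¬(∃ y, y ^ 2 = x) → η x = -1)
    (G : ℂ) (hG : G = ∑ x : F, η x * χ x)
    (lam : F → F)
    (hlam : ∀ x, lam x = ∑ i ∈ Finset.range n, (-1) ^ (i + 1) * x ^ q ^ (2 * i))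
    (s : ℕ) (hs : s = ∑ i ∈ Finset.range ((n - 1) / 2), q ^ (2 * (i + 1))) :
    ∀ A B : F, A ≠ 0 →
      ∑ w : F, χ (A * w ^ (q + 1) + B * w) =
        η A * G *
          χ (-(lam (A ^ s * B ^ q)) ^ (q + 1) /
            (4 * ∏ i ∈ Finset.range n, A ^ q ^ i)) := by
  classical
  intro A B hA
  haveI : Fact p.Prime := ⟨hp⟩
  haveI : NeZero p := ⟨hp.pos.ne'⟩
  have hnodd : Odd n := hn
  obtain ⟨m, hm⟩ := hn
  have hnpos : 0 < n := by omega
  have hm2 : (n - 1) / 2 = m := by omega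
  -- q = p ^ a
  obtain ⟨r, a, hr, ha, hrq⟩ := hq
  have hrprime : r.Prime := Nat.prime_iff.mpr hr
  obtain ⟨m0, hpm0⟩ := FiniteField.card F p
  have hqa : q = p ^ a := by
    have h1 : r ^ (a * n) = p ^ (m0 : ℕ) := by
      rw [pow_mul, hrq, ← hF, hpm0.2]
    have hrdvd : r ∣ p ^ (m0 : ℕ) := by
      rw [← h1]
      exact dvd_pow_self r (by positivity)
    have hrp : r = p :=
      (Nat.prime_dvd_prime_iff_eq hrprime hp).mp (hrprime.dvd_of_dvd_pow hrdvd)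
    rw [← hrq, hrp]
  have hq3 : 3 ≤ q := by
    have h2 : 2 ≤ q := IsPrimePow.two_le ⟨r, a, hr, ha, hrq⟩
    obtain ⟨t, ht⟩ := hqodd
    omega
  have hp2 : p ≠ 2 := by
    intro h2
    have hpq : p ∣ q := hqa ▸ dvd_pow_self p (by omega)
    rw [h2] at hpq
    obtain ⟨t, ht⟩ := hqodd
    obtain ⟨c, hc⟩ := hpq
    omega
  have hrc : ringChar F = p := ringChar.eq F p
  subst hrc
  have hrc2 : ringChar F ≠ 2 := hp2
  have h2F : (2 : F) ≠ 0 := by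
    have h1 : ((2 : ℕ) : F) ≠ 0 := by
      rw [Ne, CharP.cast_eq_zero_iff F (ringChar F) 2]
      intro hdvd
      have hle2 := Nat.le_of_dvd (by norm_num) hdvd
      have h2le := hp.two_le
      omega
    simpa using h1
  have h4F : (4 : F) ≠ 0 := by
    have h44 : (4 : F) = 2 * 2 := by norm_num
    rw [h44]
    exact mul_ne_zero h2F h2F
  -- Frobenius ring homomorphisms
  have hfr : ∀ j : ℕ, ∃ φ : F →+* F, ∀ x : F, φ x = x ^ q ^ j := by
    intro j
    refine ⟨iterateFrobenius F (ringChar F) (a * j), fun x => ?_⟩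
    rw [iterateFrobenius_def, hqa, ← pow_mul]
  have hcardx : ∀ x : F, x ^ q ^ n = x := fun x => by
    rw [← hF]; exact FiniteField.pow_card x
  have hfadd1 : ∀ x y : F, (x + y) ^ q = x ^ q + y ^ q := by
    intro x y
    obtain ⟨φ, hφ⟩ := hfr 1
    have h := map_add φ x y
    rw [hφ, hφ, hφ, pow_one] at h
    exact h
  have h2q : (2 : F) ^ q = 2 := by
    obtain ⟨φ, hφ⟩ := hfr 1
    have h := (hφ 2).symm.trans (map_ofNat φ 2)
    simpa using h
  -- character lemmas
  have hζp : ζ ^ ringChar F = 1 := hζ.pow_eq_one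
  have hχadd : ∀ x y : F, χ (x + y) = χ x * χ y := by
    intro x y
    rw [hχ, hχ, hχ, map_add, ZMod.val_add, ← pow_eq_pow_mod _ hζp, pow_add]
  have hχ0 : χ 0 = 1 := by
    rw [hχ, map_zero, ZMod.val_zero, pow_zero]
  have htrp : ∀ x : F, Algebra.trace (ZMod (ringChar F)) F (x ^ ringChar F) =
      Algebra.trace (ZMod (ringChar F)) F x := by
    intro x
    have hcomm : ∀ r : ZMod (ringChar F),
        frobeniusEquiv F (ringChar F) (algebraMap (ZMod (ringChar F)) F r) =
          algebraMap (ZMod (ringChar F)) F r := by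
      intro r
      rw [frobeniusEquiv_apply, frobenius_def, ← map_pow, ZMod.pow_card]
    exact Algebra.trace_eq_of_algEquiv
      (AlgEquiv.ofRingEquiv (f := frobeniusEquiv F (ringChar F)) hcomm) x
  have htrq : ∀ x : F, Algebra.trace (ZMod (ringChar F)) F (x ^ q) =
      Algebra.trace (ZMod (ringChar F)) F x := by
    have key : ∀ (t : ℕ) (x : F), Algebra.trace (ZMod (ringChar F)) F (x ^ ringChar F ^ t) =
        Algebra.trace (ZMod (ringChar F)) F x := by
      intro t
      induction t with
      | zero => intro x; simp
      | succ t ih =>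
          intro x
          rw [pow_succ, pow_mul, htrp, ih]
    intro x
    rw [hqa]
    exact key a x
  have hχq : ∀ x : F, χ (x ^ q) = χ x := by
    intro x
    rw [hχ, hχ, htrq]
  have hχsum : ∀ c : F, c ≠ 0 → ∑ x : F, χ (c * x) = 0 := by
    intro c hc
    obtain ⟨y, hy⟩ := FiniteField.trace_to_zmod_nondegenerate F hc
    have hχcy : χ (c * y) ≠ 1 := by
      rw [hχ]
      have hvlt := ZMod.val_lt (Algebra.trace (ZMod (ringChar F)) F (c * y))
      have hvne : (Algebra.trace (ZMod (ringChar F)) F (c * y)).val ≠ 0 := by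
        intro h0
        exact hy ((ZMod.val_eq_zero _).mp h0)
      exact hζ.pow_ne_one_of_pos_of_lt hvne hvlt
    have hshift : ∑ x : F, χ (c * (x + y)) = ∑ x : F, χ (c * x) :=
      Fintype.sum_bijective (fun x : F => x + y) (Equiv.addRight y).bijective _ _ (fun x => rfl)
    have hexp : ∑ x : F, χ (c * (x + y)) = χ (c * y) * ∑ x : F, χ (c * x) := by
      rw [Finset.mul_sum]
      refine Finset.sum_congr rfl fun x _ => ?_
      rw [mul_add, hχadd]
      ring
    have hzero : (χ (c * y) - 1) * ∑ x : F, χ (c * x) = 0 := by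
      have h := hexp.symm.trans hshift
      linear_combination h
    rcases mul_eq_zero.mp hzero with h | h
    · exact absurd (by linear_combination h) hχcy
    · exact h
  -- quadratic character lemmas
  have hηeq : ∀ x : F, η x = ((quadraticChar F x : ℤ) : ℂ) := by
    intro x
    by_cases hx : x = 0
    · rw [hx, hη0, quadraticChar_zero]
      norm_num
    · by_cases hsq : IsSquare x
      · rw [(quadraticChar_one_iff_isSquare hx).mpr hsq]
        obtain ⟨y, hy⟩ := hsq
        rw [hη1 x hx ⟨y, by rw [sq]; exact hy.symm⟩]
        norm_num
      · rw [quadraticChar_neg_one_iff_not_isSquare.mpr hsq]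
        rw [hη2 x hx ?_]
        · norm_num
        · rintro ⟨y, hy⟩
          exact hsq ⟨y, by rw [← hy, sq]⟩
  have hηmul : ∀ x y : F, η (x * y) = η x * η y := by
    intro x y
    rw [hηeq, hηeq, hηeq, map_mul]
    push_cast
    ring
  have hηA2 : η A * η A = 1 := by
    rw [hηeq]
    have hq1 := quadraticChar_sq_one (F := F) hA
    rw [pow_two] at hq1
    rw [← Int.cast_mul, hq1]
    norm_num
  have hηcount : ∀ c : F, ((Finset.univ.filter fun w : F => w ^ 2 = c).card : ℂ) = 1 + η c := by
    intro c
    have h := quadraticChar_card_sqrts hrc2 c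
    rw [Set.toFinset_setOf] at h
    rw [hηeq]
    calc ((Finset.univ.filter fun w : F => w ^ 2 = c).card : ℂ)
        = (((Finset.univ.filter fun w : F => w ^ 2 = c).card : ℤ) : ℂ) := by push_cast; ring
      _ = ((quadraticChar F c : ℤ) : ℂ) + 1 := by rw [h]; push_cast; ring
      _ = 1 + ((quadraticChar F c : ℤ) : ℂ) := by ring
  -- setup
  set NA := ∏ i ∈ Finset.range n, A ^ q ^ i with hNA
  have hNA0 : NA ≠ 0 := Finset.prod_ne_zero_iff.mpr fun i _ => pow_ne_zero _ hA
  set u := lam (A ^ s * B ^ q) with hu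
  set x0 := u / (2 * A ^ (s + 1)) with hx0def
  -- exponent identities
  have hs1 : s + 1 = ∑ i ∈ Finset.range (m + 1), q ^ (2 * i) := by
    rw [hs, hm2, Finset.sum_range_succ']
    norm_num
  have hE1 : (s + 1) * q ^ 2 = s + q ^ (n + 1) := by
    rw [hs1, Finset.sum_mul, Finset.sum_range_succ, hs, hm2]
    congr 1
    · refine Finset.sum_congr rfl fun i _ => ?_
      have h9 : 2 * (i + 1) = 2 * i + 2 := by ring
      rw [h9, ← pow_add]
    · have h9 : n + 1 = 2 * m + 2 := by omega
      rw [h9, ← pow_add]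
  have hE2 : (s + 1) * (q + 1) = ∑ j ∈ Finset.range (n + 1), q ^ j := by
    have h1 : n + 1 = 2 * (m + 1) := by omega
    rw [h1, aux_even_odd_sum (fun j => q ^ j) (m + 1), hs1, Finset.sum_mul]
    refine Finset.sum_congr rfl fun i _ => ?_
    rw [pow_succ]
    ring
  have hANA : A ^ ((s + 1) * (q + 1)) = NA * A := by
    rw [hE2, Finset.sum_range_succ, pow_add, ← Finset.prod_pow_eq_pow_sum, ← hNA, hcardx A]
  have hAs1q2 : (A ^ (s + 1)) ^ q ^ 2 = A ^ s * A ^ q := by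
    rw [← pow_mul, hE1, pow_add]
    congr 1
    have h1 : q ^ (n + 1) = q ^ n * q := by rw [pow_succ]
    rw [h1, pow_mul, hcardx A]
  -- lambda identity
  have hlamkey : ∀ x : F, lam x ^ q ^ 2 + lam x = -(2 * x) := by
    intro x
    obtain ⟨φ, hφ⟩ := hfr 2
    have hfrob : lam x ^ q ^ 2 = ∑ i ∈ Finset.range n, (-1 : F) ^ (i + 1) * x ^ q ^ (2 * i + 2) := by
      rw [hlam, ← hφ, map_sum]
      refine Finset.sum_congr rfl fun i _ => ?_
      rw [map_mul, hφ, hφ]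
      congr 1
      · rw [← pow_mul, mul_comm (i + 1) (q ^ 2), pow_mul, Odd.neg_one_pow hqodd.pow]
      · rw [← pow_mul, ← pow_add]
    set h : ℕ → F := fun j => (-1 : F) ^ j * x ^ q ^ (2 * j) with hh
    have hc1 : lam x ^ q ^ 2 = ∑ i ∈ Finset.range n, h (i + 1) := by
      rw [hfrob]
      refine Finset.sum_congr rfl fun i _ => ?_
      simp only [hh]
      have h9 : 2 * (i + 1) = 2 * i + 2 := by ring
      rw [h9]
    have hc2 : lam x = ∑ i ∈ Finset.range n, -(h i) := by
      rw [hlam]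
      refine Finset.sum_congr rfl fun i _ => ?_
      simp only [hh]
      rw [pow_succ]
      ring
    rw [hc1, hc2]
    have e1 := Finset.sum_range_succ' h n
    have e2 := Finset.sum_range_succ h n
    have hhn : h n = -x := by
      simp only [hh]
      have hq2n : q ^ (2 * n) = q ^ n * q ^ n := by rw [two_mul, pow_add]
      rw [hq2n, pow_mul, hcardx, hcardx, Odd.neg_one_pow hnodd]
      ring
    have hh0 : h 0 = x := by
      simp only [hh]
      norm_num
    rw [Finset.sum_neg_distrib]
    linear_combination e2 - e1 + hhn - hh0
  have hukey : u ^ q ^ 2 = -(2 * (A ^ s * B ^ q)) - u := by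
    have h := hlamkey (A ^ s * B ^ q)
    rw [← hu] at h
    linear_combination h
  -- the completing-the-square point x0
  have hx0 : A ^ q * x0 ^ q ^ 2 + A * x0 = -(B ^ q) := by
    obtain ⟨φ, hφ⟩ := hfr 2
    have h1 : x0 ^ q ^ 2 = u ^ q ^ 2 / (2 * (A ^ (s + 1)) ^ q ^ 2) := by
      rw [hx0def, ← hφ, map_div₀, map_mul, map_ofNat, hφ, hφ]
    rw [h1, hAs1q2, hukey, hx0def]
    have hAs : A ^ s ≠ 0 := pow_ne_zero _ hA
    have hAq : A ^ q ≠ 0 := pow_ne_zero _ hA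
    have hAs1 : A ^ (s + 1) ≠ 0 := pow_ne_zero _ hA
    field_simp
    ring
  have hx0' : A * x0 ^ q + (A * x0) ^ q ^ (n - 1) = -B := by
    obtain ⟨φ, hφ⟩ := hfr (n - 1)
    have h := congrArg φ hx0
    simp only [map_add, map_neg, map_mul] at h
    simp only [hφ] at h
    have e1 : (A ^ q) ^ q ^ (n - 1) = A := by
      rw [← pow_mul]
      have h4 : q * q ^ (n - 1) = q ^ n := by
        rw [← pow_succ']
        congr 1
        omega
      rw [h4, hcardx]
    have e2 : (x0 ^ q ^ 2) ^ q ^ (n - 1) = x0 ^ q := by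
      rw [← pow_mul, ← pow_add]
      have h3 : 2 + (n - 1) = n + 1 := by omega
      rw [h3, pow_succ, pow_mul, hcardx]
    have e3 : (B ^ q) ^ q ^ (n - 1) = B := by
      rw [← pow_mul]
      have h4 : q * q ^ (n - 1) = q ^ n := by
        rw [← pow_succ']
        congr 1
        omega
      rw [h4, hcardx]
    rw [e1, e2, e3, ← mul_pow] at h
    exact h
  -- shift the sum by x0
  have hstepA : ∑ w : F, χ (A * w ^ (q + 1) + B * w) =
      ∑ w : F, χ (A * (w + x0) ^ (q + 1) + B * (w + x0)) :=
    (Fintype.sum_bijective (fun w : F => w + x0) (Equiv.addRight x0).bijective _ _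
      (fun w => rfl)).symm
  have hstepB : ∀ w : F, χ (A * (w + x0) ^ (q + 1) + B * (w + x0)) =
      χ (-(A * x0 ^ (q + 1))) * χ (A * w ^ (q + 1)) := by
    intro w
    have hexp : A * (w + x0) ^ (q + 1) + B * (w + x0) =
        (A * w ^ (q + 1) + A * x0 * w ^ q) +
          ((A * x0 ^ q + B) * w + (A * x0 ^ (q + 1) + B * x0)) := by
      have h1 : (w + x0) ^ (q + 1) = (w ^ q + x0 ^ q) * (w + x0) := by
        rw [pow_succ, hfadd1]
      rw [h1]
      ring
    have hmid : χ (A * x0 * w ^ q) = χ ((A * x0) ^ q ^ (n - 1) * w) := by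
      have h3 : ((A * x0) ^ q ^ (n - 1) * w) ^ q = A * x0 * w ^ q := by
        rw [mul_pow, ← pow_mul]
        have h4 : q ^ (n - 1) * q = q ^ n := by
          rw [← pow_succ]
          congr 1
          omega
        rw [h4, hcardx]
      rw [← h3, hχq]
    have hcomb : χ ((A * x0) ^ q ^ (n - 1) * w) * χ ((A * x0 ^ q + B) * w) = 1 := by
      rw [← hχadd, ← add_mul]
      have h5 : (A * x0) ^ q ^ (n - 1) + (A * x0 ^ q + B) = 0 := by linear_combination hx0'
      rw [h5, zero_mul, hχ0]
    have hlast : χ (A * x0 ^ (q + 1) + B * x0) = χ (-(A * x0 ^ (q + 1))) := by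
      have h5 : A * x0 ^ (q + 1) + B * x0 = -((A * x0) ^ q ^ (n - 1) * x0) := by
        have hB : B = -(A * x0 ^ q) - (A * x0) ^ q ^ (n - 1) := by linear_combination hx0'
        rw [hB, pow_succ]
        ring
      have h6 : (-((A * x0) ^ q ^ (n - 1) * x0)) ^ q = -(A * x0 ^ (q + 1)) := by
        rw [hqodd.neg_pow, mul_pow, ← pow_mul]
        have h4 : q ^ (n - 1) * q = q ^ n := by
          rw [← pow_succ]
          congr 1
          omega
        rw [h4, hcardx, pow_succ]
        ring
      rw [h5, ← h6, hχq]
    rw [hexp, hχadd, hχadd, hχadd, hmid, hlast]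
    linear_combination (χ (A * w ^ (q + 1)) * χ (-(A * x0 ^ (q + 1)))) * hcomb
  have hstepC : ∑ w : F, χ (A * w ^ (q + 1) + B * w) =
      χ (-(A * x0 ^ (q + 1))) * ∑ w : F, χ (A * w ^ (q + 1)) := by
    rw [hstepA, Finset.sum_congr rfl fun w _ => hstepB w, ← Finset.mul_sum]
  -- the value at x0
  have hval : -(A * x0 ^ (q + 1)) = -u ^ (q + 1) / (4 * NA) := by
    have h1 : x0 ^ (q + 1) = u ^ (q + 1) / (2 * A ^ (s + 1)) ^ (q + 1) := by
      rw [hx0def, div_pow]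
    have h3 : (2 : F) ^ (q + 1) = 4 := by
      rw [pow_succ, h2q]
      norm_num
    have h2 : (2 * A ^ (s + 1)) ^ (q + 1) = 4 * (NA * A) := by
      rw [mul_pow, h3, ← pow_mul, hANA]
    rw [h1, h2]
    field_simp
  -- evaluation of the Gauss-type sum ∑ χ(A w^{q+1})
  have hS0 : ∑ w : F, χ (A * w ^ (q + 1)) = η A * G := by
    obtain ⟨e, hepos, hecop, hemod⟩ := aux_exists_e q n hq3 hqodd hnodd
    have hbij : Function.Bijective (fun w : F => w ^ e) := by
      refine Finite.injective_iff_bijective.mp ?_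
      intro x y hxy
      simp only at hxy
      by_cases hy : y = 0
      · subst hy
        rw [zero_pow hepos.ne'] at hxy
        exact pow_eq_zero_iff hepos.ne' |>.mp hxy
      · by_cases hx : x = 0
        · exfalso
          subst hx
          rw [zero_pow hepos.ne'] at hxy
          exact hy (pow_eq_zero_iff hepos.ne' |>.mp hxy.symm)
        · have hdiv : (x / y) ^ e = 1 := by
            rw [div_pow, hxy, div_self (pow_ne_zero _ hy)]
          have hNone : (x / y) ^ (q ^ n - 1) = 1 := by
            have h := FiniteField.pow_card_sub_one_eq_one (x / y) (div_ne_zero hx hy)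
            rwa [hF] at h
          have h1 := orderOf_dvd_of_pow_eq_one hdiv
          have h2 := orderOf_dvd_of_pow_eq_one hNone
          have h3 : orderOf (x / y) ∣ 1 := by
            have h := Nat.dvd_gcd h1 h2
            rwa [hecop.gcd_eq_one] at h
          have h4 : x / y = 1 := orderOf_eq_one_iff.mp (Nat.dvd_one.mp h3)
          exact (div_eq_one_iff_eq hy).mp h4
    have hrew : ∀ w : F, w ^ (q + 1) = (w ^ e) ^ 2 := by
      intro w
      by_cases hw : w = 0
      · subst hw
        rw [zero_pow (by omega : q + 1 ≠ 0), zero_pow hepos.ne',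
          zero_pow (by norm_num : (2 : ℕ) ≠ 0)]
      · have hwN : w ^ (q ^ n - 1) = 1 := by
          have h := FiniteField.pow_card_sub_one_eq_one w hw
          rwa [hF] at h
        rw [← pow_mul, pow_eq_pow_mod (q + 1) hwN, pow_eq_pow_mod (e * 2) hwN]
        congr 1
        have h6 : e * 2 = 2 * e := by ring
        rw [h6]
        exact hemod
    calc ∑ w : F, χ (A * w ^ (q + 1)) = ∑ w : F, χ (A * (w ^ e) ^ 2) := by
          refine Finset.sum_congr rfl fun w _ => ?_
          rw [hrew w]
      _ = ∑ w : F, χ (A * w ^ 2) :=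
          Fintype.sum_bijective (fun w : F => w ^ e) hbij _ _ (fun w => rfl)
      _ = ∑ c : F, ((Finset.univ.filter fun w : F => w ^ 2 = c).card : ℂ) * χ (A * c) := by
          rw [← Finset.sum_fiberwise' Finset.univ (fun w : F => w ^ 2) (fun c => χ (A * c))]
          refine Finset.sum_congr rfl fun c _ => ?_
          rw [Finset.sum_const, nsmul_eq_mul]
      _ = ∑ c : F, (1 + η c) * χ (A * c) := by
          refine Finset.sum_congr rfl fun c _ => ?_
          rw [hηcount c]
      _ = (∑ c : F, χ (A * c)) + ∑ c : F, η c * χ (A * c) := by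
          rw [← Finset.sum_add_distrib]
          refine Finset.sum_congr rfl fun c _ => ?_
          ring
      _ = ∑ c : F, η c * χ (A * c) := by rw [hχsum A hA, zero_add]
      _ = η A * G := by
          have hstep5 : η A * ∑ c : F, η c * χ (A * c) = G := by
            rw [Finset.mul_sum, hG]
            rw [Finset.sum_congr rfl fun c _ =>
              (show η A * (η c * χ (A * c)) = η (A * c) * χ (A * c) by rw [hηmul]; ring)]
            exact Fintype.sum_bijective (fun c : F => A * c) (Equiv.mulLeft₀ A hA).bijective _ _
              fun c => rfl
          calc ∑ c : F, η c * χ (A * c)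
              = (η A * η A) * ∑ c : F, η c * χ (A * c) := by rw [hηA2, one_mul]
            _ = η A * (η A * ∑ c : F, η c * χ (A * c)) := by ring
            _ = η A * G := by rw [hstep5]
  rw [hstepC, hS0, hval]
  ring
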